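/- Maximum principle bound: if u is a bounded Borel function on Ω_ε satisfying the DPP at every point of Ω with u = F on Γ_ε, where F : Γ_ε → ℝ is bounded Borel, then |u(x)| ≤ sup_{Γ_ε} |F| for every x ∈ Ω_ε. -/

import Mathlib

open MeasureTheory Metric Set

noncomputable def dppRay {n : ℕ} (x w : EuclideanSpace ℝ (Fin n)) (t : ℝ) :
    EuclideanSpace ℝ (Fin n) := x + (t / dist x w) • (w - x)

lemma dppRay_zero {n : ℕ} (x w : EuclideanSpace ℝ (Fin n)) : dppRay x w 0 = x := by
  simp [dppRay]

lemma dppRay_end {n : ℕ} {x w : EuclideanSpace ℝ (Fin n)} (h : x ≠ w) :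
    dppRay x w (dist x w) = w := by
  have hd : dist x w ≠ 0 := (dist_pos.mpr h).ne'
  simp [dppRay, div_self hd]

lemma dppRay_dist {n : ℕ} {x w : EuclideanSpace ℝ (Fin n)} (h : x ≠ w) (s t : ℝ) :
    dist (dppRay x w s) (dppRay x w t) = |s - t| := by
  have hd : (0:ℝ) < dist x w := dist_pos.mpr h
  have hsub : dppRay x w s - dppRay x w t = ((s - t) / dist x w) • (w - x) := by
    simp only [dppRay]
    rw [add_sub_add_left_eq_sub, ← sub_smul, div_sub_div_same]
  rw [dist_eq_norm, hsub, norm_smul, Real.norm_eq_abs, abs_div,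
    abs_of_pos hd, ← dist_eq_norm', div_mul_cancel₀]
  exact hd.ne'

lemma dpp_exit_ray {n : ℕ} {Ω : Set (EuclideanSpace ℝ (Fin n))} (hΩopen : IsOpen Ω)
    {x w : EuclideanSpace ℝ (Fin n)} (hx : x ∈ Ω) (hw : w ∉ Ω) :
    ∃ T : ℝ, 0 < T ∧ T ≤ dist x w ∧ dppRay x w T ∈ frontier Ω ∧ dppRay x w T ∉ Ω ∧
      ∀ t, 0 ≤ t → t < T → dppRay x w t ∈ Ω := by
  have hxw : x ≠ w := fun h => hw (h ▸ hx)
  have hd : (0:ℝ) < dist x w := dist_pos.mpr hxw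
  set E' : Set ℝ := {t : ℝ | 0 ≤ t ∧ dppRay x w t ∉ Ω} with hE'
  have hdE : dist x w ∈ E' := ⟨hd.le, by rw [dppRay_end hxw]; exact hw⟩
  have hEne : E'.Nonempty := ⟨_, hdE⟩
  have hEbdd : BddBelow E' := ⟨0, fun t ht => ht.1⟩
  set T := sInf E' with hT
  have hT0 : 0 ≤ T := le_csInf hEne fun t ht => ht.1
  have hTd : T ≤ dist x w := csInf_le hEbdd hdE
  have hmem : ∀ t, 0 ≤ t → t < T → dppRay x w t ∈ Ω := by
    intro t ht htT
    by_contra h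
    exact absurd (csInf_le hEbdd ⟨ht, h⟩) (not_le.mpr htT)
  have hTnot : dppRay x w T ∉ Ω := by
    intro hmemΩ
    obtain ⟨δ, hδ, hballs⟩ := Metric.isOpen_iff.mp hΩopen _ hmemΩ
    obtain ⟨t, htE, htlt⟩ := exists_lt_of_csInf_lt hEne (lt_add_of_pos_right T hδ)
    have hTt : T ≤ t := csInf_le hEbdd htE
    have : dppRay x w t ∈ Ω := by
      apply hballs
      rw [Metric.mem_ball, dppRay_dist hxw, abs_of_nonneg (by linarith)]
      linarith
    exact htE.2 this
  have hTpos : 0 < T := by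
    rcases hT0.lt_or_eq with h | h
    · exact h
    · exfalso; apply hTnot; rw [← h, dppRay_zero]; exact hx
  have hclo : dppRay x w T ∈ closure Ω := by
    rw [Metric.mem_closure_iff]
    intro δ hδ
    refine ⟨dppRay x w (max 0 (T - δ/2)), hmem _ (le_max_left _ _) ?_, ?_⟩
    · exact max_lt hTpos (by linarith)
    · rw [dppRay_dist hxw]
      have h1 : T - δ/2 ≤ max 0 (T - δ/2) := le_max_right _ _
      have h2 : max 0 (T - δ/2) ≤ T := max_le hTpos.le (by linarith)
      rw [abs_of_nonneg (by linarith)]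
      linarith
  refine ⟨T, hTpos, hTd, ?_, hTnot, hmem⟩
  rw [frontier, hΩopen.interior_eq]
  exact ⟨hclo, hTnot⟩

theorem dpp_le_sup (n : ℕ) (hn : 2 ≤ n) (p : ℝ) (hp : 2 < p)
    (Ω : Set (EuclideanSpace ℝ (Fin n)))
    (hΩopen : IsOpen Ω) (hΩne : Ω.Nonempty) (hΩbdd : Bornology.IsBounded Ω)
    (ε : ℝ) (hε0 : 0 < ε) (hε1 : ε < 1)
    (F u : EuclideanSpace ℝ (Fin n) → ℝ)
    (humeas : Measurable u)
    (K : ℝ) (hK : ∀ x ∈ Ω ∪ {x | x ∉ Ω ∧ Metric.infDist x (frontier Ω) ≤ ε}, |u x| ≤ K)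
    (MF : ℝ) (hMF : ∀ x ∈ {x | x ∉ Ω ∧ Metric.infDist x (frontier Ω) ≤ ε}, |F x| ≤ MF)
    (hudpp : ∀ x ∈ Ω, u x =
        ((p - 2) / (n + p)) / (2 * ε) *
            (∫ t in (0 : ℝ)..ε, (sSup (u '' Metric.ball x t) + sInf (u '' Metric.ball x t)))
          + ((n + 2) / (n + p)) * ⨍ z in Metric.ball x ε, u z)
    (hbdry : ∀ x ∈ {x | x ∉ Ω ∧ Metric.infDist x (frontier Ω) ≤ ε}, u x = F x) :
    ∀ x ∈ Ω ∪ {x | x ∉ Ω ∧ Metric.infDist x (frontier Ω) ≤ ε},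
      u x ≤ sSup ((fun y => |F y|) '' {x | x ∉ Ω ∧ Metric.infDist x (frontier Ω) ≤ ε}) := by
  set Γ : Set (EuclideanSpace ℝ (Fin n)) :=
    {x | x ∉ Ω ∧ Metric.infDist x (frontier Ω) ≤ ε} with hΓdef
  set D : Set (EuclideanSpace ℝ (Fin n)) := Ω ∪ Γ with hDdef
  set a : ℝ := (p - 2) / (n + p) with hadef
  set b : ℝ := ((n : ℝ) + 2) / (n + p) with hbdef
  have hnp : (0:ℝ) < (n:ℝ) + p := by
    have : (0:ℝ) ≤ (n:ℝ) := Nat.cast_nonneg n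
    linarith
  have ha : 0 < a := div_pos (by linarith) hnp
  have hb : 0 < b := div_pos (by positivity) hnp
  have hab : a + b = 1 := by
    rw [hadef, hbdef, ← add_div, div_eq_one_iff_eq hnp.ne']
    ring
  have ha1 : a < 1 := by
    rw [hadef, div_lt_one hnp]
    have : (0:ℝ) ≤ (n:ℝ) := Nat.cast_nonneg n
    linarith
  set C : ℝ := 4 / a with hCdef
  have hCpos : 0 < C := by positivity
  have hC1 : 1 ≤ C := by
    rw [hCdef, le_div_iff₀ ha]; linarith
  -- basic facts about D and S
  have hKD : ∀ y ∈ D, u y ≤ K ∧ -K ≤ u y :=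
    fun y hy => ⟨(abs_le.mp (hK y hy)).2, (abs_le.mp (hK y hy)).1⟩
  have hDne : D.Nonempty := hΩne.mono subset_union_left
  have hbddA : BddAbove (u '' D) := by
    refine ⟨K, ?_⟩
    rintro _ ⟨y, hy, rfl⟩
    exact (hKD y hy).1
  have hbddB : BddBelow (u '' D) := by
    refine ⟨-K, ?_⟩
    rintro _ ⟨y, hy, rfl⟩
    exact (hKD y hy).2
  set S : ℝ := sSup (u '' D) with hSdef
  have huS : ∀ y ∈ D, u y ≤ S := fun y hy => le_csSup hbddA (mem_image_of_mem u hy)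
  -- balls around interior points stay in D
  have hball : ∀ x ∈ Ω, ball x ε ⊆ D := by
    intro x hx y hy
    by_cases hyΩ : y ∈ Ω
    · exact Or.inl hyΩ
    · right
      obtain ⟨T, hT0, hTd, hTfr, _, _⟩ := dpp_exit_ray hΩopen hx hyΩ
      refine ⟨hyΩ, ?_⟩
      have hxy : x ≠ y := fun h => hyΩ (h ▸ hx)
      have h1 : Metric.infDist y (frontier Ω) ≤ dist y (dppRay x y T) :=
        Metric.infDist_le_dist_of_mem hTfr
    -- dist y (ray T) = dist (ray d) (ray T) = d - T ≤ d < ε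
      have h2 : dist y (dppRay x y T) = dist x y - T := by
        have h2' := dppRay_dist hxy (dist x y) T
        rw [dppRay_end hxy] at h2'
        rw [h2', abs_of_nonneg (by linarith)]
      have h3 : dist x y < ε := by rwa [dist_comm, ← Metric.mem_ball]
      linarith
  -- boundary bound
  set MΓ : ℝ := sSup ((fun y => |F y|) '' Γ) with hMΓdef
  have hMΓbdd : BddAbove ((fun y => |F y|) '' Γ) := by
    refine ⟨MF, ?_⟩
    rintro _ ⟨y, hy, rfl⟩
    exact hMF y hy
  have hFle : ∀ y ∈ Γ, u y ≤ MΓ := by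
    intro y hy
    rw [hbdry y hy]
    exact le_trans (le_abs_self _) (le_csSup hMΓbdd ⟨y, hy, rfl⟩)
  -- THE KEY STEP
  have hstep : ∀ x ∈ Ω, ∀ y ∈ ball x (ε/2), S - u y ≤ C * (S - u x) := by
    intro x hx y hy
    have hsubε : ball x ε ⊆ D := hball x hx
    have hsub : ∀ t : ℝ, t ≤ ε → ball x t ⊆ D :=
      fun t ht => (ball_subset_ball ht).trans hsubε
    have hne : ∀ t : ℝ, 0 < t → (u '' ball x t).Nonempty :=
      fun t ht => ⟨u x, mem_image_of_mem u (mem_ball_self ht)⟩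
    have hbA : ∀ t : ℝ, t ≤ ε → BddAbove (u '' ball x t) :=
      fun t ht => hbddA.mono (image_mono (f := u) (hsub t ht))
    have hbB : ∀ t : ℝ, t ≤ ε → BddBelow (u '' ball x t) :=
      fun t ht => hbddB.mono (image_mono (f := u) (hsub t ht))
    set m : ℝ := sInf (u '' ball x (ε/2)) with hmdef
    -- the modified integrand
    set G₁ : ℝ → ℝ := fun t => if t ≤ 0 then -K else sSup (u '' ball x t) with hG₁
    set G₂ : ℝ → ℝ := fun t => if t ≤ 0 then K else sInf (u '' ball x t) with hG₂
    have hxD : x ∈ D := Or.inl hx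
    have hmono : MonotoneOn G₁ (Set.uIcc 0 ε) := by
      rw [Set.uIcc_of_le hε0.le]
      intro s hs t ht hst
      by_cases hs0 : s ≤ 0
      · rw [hG₁]; simp only [if_pos hs0]
        by_cases ht0 : t ≤ 0
        · simp only [if_pos ht0]; exact le_refl _
        · simp only [if_neg ht0]
          push_neg at ht0
          exact le_trans (hKD x hxD).2
            (le_csSup (hbA t ht.2) (mem_image_of_mem u (mem_ball_self ht0)))
      · push_neg at hs0
        have ht0 : ¬ t ≤ 0 := by push_neg; linarith
        rw [hG₁]; simp only [if_neg (not_le.mpr hs0), if_neg ht0]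
        exact csSup_le_csSup (hbA t ht.2) (hne s hs0) (image_mono (f := u) (ball_subset_ball hst))
    have hanti : AntitoneOn G₂ (Set.uIcc 0 ε) := by
      rw [Set.uIcc_of_le hε0.le]
      intro s hs t ht hst
      by_cases hs0 : s ≤ 0
      · rw [hG₂]; simp only [if_pos hs0]
        by_cases ht0 : t ≤ 0
        · simp only [if_pos ht0]; exact le_refl _
        · simp only [if_neg ht0]
          push_neg at ht0
          exact le_trans (csInf_le (hbB t ht.2) (mem_image_of_mem u (mem_ball_self ht0)))
            (hKD x hxD).1
      · push_neg at hs0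
        have ht0 : ¬ t ≤ 0 := by push_neg; linarith
        rw [hG₂]; simp only [if_neg (not_le.mpr hs0), if_neg ht0]
        exact csInf_le_csInf (hbB t ht.2) (hne s hs0) (image_mono (f := u) (ball_subset_ball hst))
    have hGint : IntervalIntegrable (fun t => G₁ t + G₂ t) volume 0 ε :=
      hmono.intervalIntegrable.add hanti.intervalIntegrable
    have hGIoc : IntegrableOn (fun t => G₁ t + G₂ t) (Set.Ioc 0 ε) volume :=
      (intervalIntegrable_iff_integrableOn_Ioc_of_le hε0.le).mp hGint
    -- the integral in the DPP equals the integral of G over Ioc 0 ε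
    have hIeq : (∫ t in (0:ℝ)..ε, (sSup (u '' ball x t) + sInf (u '' ball x t)))
        = ∫ t in Set.Ioc (0:ℝ) ε, (G₁ t + G₂ t) := by
      rw [intervalIntegral.integral_of_le hε0.le]
      refine setIntegral_congr_fun measurableSet_Ioc ?_
      intro t ht
      have ht0 : ¬ t ≤ 0 := not_le.mpr ht.1
      simp only [hG₁, hG₂, if_neg ht0]
    -- the piecewise-constant upper bound
    set h : ℝ → ℝ := fun t => if t ≤ ε/2 then 2*S else S + m with hhdef
    have hHIoc : IntegrableOn h (Set.Ioc 0 ε) volume := by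
      apply Measure.integrableOn_of_bounded (M := |2*S| ⊔ |S + m|) measure_Ioc_lt_top.ne
      · apply Measurable.aestronglyMeasurable
        apply Measurable.ite (by exact measurableSet_Iic) measurable_const measurable_const
      · apply ae_of_all
        intro t
        simp only [hhdef]
        split_ifs
        · exact le_max_of_le_left (by rw [Real.norm_eq_abs])
        · exact le_max_of_le_right (by rw [Real.norm_eq_abs])
    have hGh : ∀ t ∈ Set.Ioc (0:ℝ) ε, G₁ t + G₂ t ≤ h t := by
      intro t ht
      have ht0 : ¬ t ≤ 0 := not_le.mpr ht.1
      have hsupS : sSup (u '' ball x t) ≤ S :=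
        csSup_le (hne t ht.1) (fun z hz => by
          obtain ⟨y', hy', rfl⟩ := hz
          exact huS y' (hsub t ht.2 hy'))
      have hinfS : sInf (u '' ball x t) ≤ S :=
        le_trans (csInf_le (hbB t ht.2) (mem_image_of_mem u (mem_ball_self ht.1))) (huS x hxD)
      simp only [hG₁, hG₂, hhdef, if_neg ht0]
      split_ifs with hhalf
      · linarith
      · push_neg at hhalf
        have hinfm : sInf (u '' ball x t) ≤ m := by
          rw [hmdef]
          exact csInf_le_csInf (hbB t ht.2) (hne (ε/2) (by linarith))
            (image_mono (f := u) (ball_subset_ball hhalf.le))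
        linarith
    have hIbound : (∫ t in Set.Ioc (0:ℝ) ε, (G₁ t + G₂ t)) ≤ ε/2*(2*S) + ε/2*(S + m) := by
      calc (∫ t in Set.Ioc (0:ℝ) ε, (G₁ t + G₂ t))
          ≤ ∫ t in Set.Ioc (0:ℝ) ε, h t := setIntegral_mono_on hGIoc hHIoc measurableSet_Ioc hGh
        _ = (∫ t in Set.Ioc (0:ℝ) (ε/2), h t) + ∫ t in Set.Ioc (ε/2) ε, h t := by
            rw [← Set.Ioc_union_Ioc_eq_Ioc (by linarith : (0:ℝ) ≤ ε/2) (by linarith : ε/2 ≤ ε)]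
            exact setIntegral_union (Set.Ioc_disjoint_Ioc_of_le le_rfl) measurableSet_Ioc
              (hHIoc.mono_set (Set.Ioc_subset_Ioc le_rfl (by linarith)))
              (hHIoc.mono_set (Set.Ioc_subset_Ioc (by linarith) le_rfl))
        _ = ε/2*(2*S) + ε/2*(S + m) := by
            have e1 : (∫ t in Set.Ioc (0:ℝ) (ε/2), h t) = ε/2*(2*S) := by
              rw [setIntegral_congr_fun measurableSet_Ioc
                (g := fun _ => 2*S) (fun t ht => if_pos ht.2),
                setIntegral_const, Real.volume_real_Ioc_of_le (by linarith), smul_eq_mul]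
              ring
            have e2 : (∫ t in Set.Ioc (ε/2) ε, h t) = ε/2*(S + m) := by
              rw [setIntegral_congr_fun measurableSet_Ioc
                (g := fun _ => S + m) (fun t ht => if_neg (not_le.mpr ht.1)),
                setIntegral_const, Real.volume_real_Ioc_of_le (by linarith), smul_eq_mul]
              ring
            rw [e1, e2]
    -- the average bound
    have hvol0 : volume (ball x ε) ≠ 0 := (measure_ball_pos volume x hε0).ne'
    have hvolT : volume (ball x ε) ≠ ⊤ := measure_ball_lt_top.ne
    have hAvg : (⨍ z in ball x ε, u z) ≤ S := by
      have hintu : IntegrableOn u (ball x ε) volume := by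
        apply Measure.integrableOn_of_bounded (M := K) hvolT humeas.aestronglyMeasurable
        rw [ae_restrict_iff' measurableSet_ball]
        apply ae_of_all
        intro z hz
        rw [Real.norm_eq_abs]
        exact hK z (hsubε hz)
      have h1 : (∫ z in ball x ε, u z) ≤ (volume (ball x ε)).toReal * S := by
        calc (∫ z in ball x ε, u z) ≤ ∫ _z in ball x ε, S :=
              setIntegral_mono_on hintu
                (integrableOn_const hvolT) measurableSet_ball
                (fun z hz => huS z (hsubε hz))
          _ = (volume (ball x ε)).toReal * S := by rw [setIntegral_const, smul_eq_mul]; rfl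
      rw [setAverage_eq, smul_eq_mul]
      have htR : 0 < (volume (ball x ε)).toReal := ENNReal.toReal_pos hvol0 hvolT
      calc (volume (ball x ε)).toReal⁻¹ * ∫ z in ball x ε, u z
          ≤ (volume (ball x ε)).toReal⁻¹ * ((volume (ball x ε)).toReal * S) := by
            apply mul_le_mul_of_nonneg_left h1 (by positivity)
        _ = S := by field_simp
    -- combine
    have hu_le : u x ≤ a/(2*ε) * (ε/2*(2*S) + ε/2*(S + m)) + b * S := by
      rw [hudpp x hx, hIeq]
      have h2 : a/(2*ε) * (∫ t in Set.Ioc (0:ℝ) ε, (G₁ t + G₂ t))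
          ≤ a/(2*ε) * (ε/2*(2*S) + ε/2*(S + m)) :=
        mul_le_mul_of_nonneg_left hIbound (by positivity)
      have h3 : b * (⨍ z in ball x ε, u z) ≤ b * S :=
        mul_le_mul_of_nonneg_left hAvg hb.le
      exact add_le_add h2 h3
    have hsimp : a/(2*ε) * (ε/2*(2*S) + ε/2*(S + m)) = a*(3*S/4 + m/4) := by
      field_simp
      ring
    rw [hsimp] at hu_le
    have hb' : b = 1 - a := by linarith
    rw [hb'] at hu_le
    have hkey : u x ≤ S - a/4*(S - m) := by
      have : a*(3*S/4 + m/4) + (1-a)*S = S - a/4*(S-m) := by ring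
      linarith
    have hmy : m ≤ u y := csInf_le (hbB (ε/2) (by linarith)) (mem_image_of_mem u hy)
    have h2 : a/4 * (S - m) ≤ S - u x := by linarith
    have h3 : S - m ≤ C * (S - u x) := by
      have := mul_le_mul_of_nonneg_left h2 (le_of_lt (by positivity : (0:ℝ) < 4/a))
      calc S - m = 4/a * (a/4 * (S - m)) := by field_simp
        _ ≤ 4/a * (S - u x) := this
        _ = C * (S - u x) := by rw [hCdef]
    linarith
  -- THE CHAIN
  obtain ⟨R, hRpos, hRsub⟩ := hΩbdd.subset_closedBall_lt 0 0
  set N : ℕ := ⌈(2*R+1)/(ε/4)⌉₊ with hNdef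
  have hCN : (0:ℝ) < C^N := pow_pos hCpos N
  have hCN1 : (1:ℝ) ≤ C^N := one_le_pow₀ hC1
  have hchain : ∀ x₀ ∈ Ω, ∃ z ∈ Γ, S - u z ≤ C^N * (S - u x₀) := by
    intro x₀ hx₀
    set v : EuclideanSpace ℝ (Fin n) :=
      EuclideanSpace.single (⟨0, by omega⟩ : Fin n) (1:ℝ) with hvdef
    have hv : ‖v‖ = 1 := by rw [hvdef, EuclideanSpace.norm_single]; norm_num
    set w : EuclideanSpace ℝ (Fin n) := (R+1) • v with hwdef
    have hwnorm : ‖w‖ = R+1 := by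
      rw [hwdef, norm_smul, hv, Real.norm_eq_abs, abs_of_pos (by linarith), mul_one]
    have hwΩ : w ∉ Ω := by
      intro hw
      have := hRsub hw
      rw [mem_closedBall, dist_zero_right, hwnorm] at this
      linarith
    obtain ⟨T, hT0, hTd, hTfr, hTnot, hTmem⟩ := dpp_exit_ray hΩopen hx₀ hwΩ
    have hxw : x₀ ≠ w := fun h => hwΩ (h ▸ hx₀)
    have hx₀R : ‖x₀‖ ≤ R := by
      have := hRsub hx₀
      rwa [mem_closedBall, dist_zero_right] at this
    have hdw : dist x₀ w ≤ 2*R+1 := by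
      calc dist x₀ w ≤ ‖x₀‖ + ‖w‖ := by rw [dist_eq_norm]; exact norm_sub_le _ _
        _ ≤ 2*R+1 := by rw [hwnorm]; linarith
    have hzΓ : dppRay x₀ w T ∈ Γ := by
      refine ⟨hTnot, ?_⟩
      rw [Metric.infDist_zero_of_mem hTfr]
      exact hε0.le
    have hTN : T ≤ (N:ℝ) * (ε/4) := by
      have h1 : (2*R+1)/(ε/4) ≤ (N:ℝ) := Nat.le_ceil _
      rw [div_le_iff₀ (by linarith)] at h1
      linarith
    have key : ∀ j : ℕ, ∀ t : ℝ, 0 ≤ t → t ≤ T → t ≤ (j:ℝ) * (ε/4) →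
        S - u (dppRay x₀ w t) ≤ C^j * (S - u x₀) := by
      intro j
      induction j with
      | zero =>
        intro t ht0 htT htj
        have ht : t = 0 := le_antisymm (by simpa using htj) ht0
        rw [ht, dppRay_zero, pow_zero, one_mul]
      | succ j ih =>
        intro t ht0 htT htj
        have hx₀S : u x₀ ≤ S := huS x₀ (Or.inl hx₀)
        by_cases hcase : t ≤ (j:ℝ) * (ε/4)
        · have h1 := ih t ht0 htT hcase
          have hpow : C^j ≤ C^(j+1) := pow_le_pow_right₀ hC1 (Nat.le_succ j)
          exact le_trans h1 (mul_le_mul_of_nonneg_right hpow (sub_nonneg.mpr hx₀S))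
        · push_neg at hcase
          push_cast at htj
          set t' : ℝ := max 0 (t - ε/4) with ht'def
          have ht'0 : 0 ≤ t' := le_max_left _ _
          have ht'j : t' ≤ (j:ℝ) * (ε/4) := max_le (by positivity) (by linarith)
          have htpos : 0 < t := lt_of_le_of_lt (by positivity) hcase
          have ht't : t' < t := max_lt htpos (by linarith)
          have ht'T : t' ≤ T := le_trans ht't.le htT
          have ht'Ω : dppRay x₀ w t' ∈ Ω := hTmem t' ht'0 (lt_of_lt_of_le ht't htT)
          have hdist : dppRay x₀ w t ∈ ball (dppRay x₀ w t') (ε/2) := by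
            rw [Metric.mem_ball, dppRay_dist hxw, abs_of_nonneg (by linarith)]
            have := le_max_right 0 (t - ε/4)
            linarith
          have h1 := hstep _ ht'Ω _ hdist
          have h2 := ih t' ht'0 ht'T ht'j
          calc S - u (dppRay x₀ w t) ≤ C * (S - u (dppRay x₀ w t')) := h1
            _ ≤ C * (C^j * (S - u x₀)) := mul_le_mul_of_nonneg_left h2 hCpos.le
            _ = C^(j+1) * (S - u x₀) := by rw [pow_succ]; ring
    exact ⟨dppRay x₀ w T, hzΓ, key N T hT0.le le_rfl hTN⟩
  -- FINAL ASSEMBLY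
  have hSM : S ≤ MΓ := by
    have hstep2 : ∀ η : ℝ, 0 < η → S ≤ MΓ + C^N * η := by
      intro η hη
      obtain ⟨_, ⟨x₀, hx₀D, rfl⟩, hgt⟩ :=
        exists_lt_of_lt_csSup (hDne.image u) (show S - η < S by linarith)
      rcases hx₀D with hx₀Ω | hx₀Γ
      · obtain ⟨z, hzΓ, hz⟩ := hchain x₀ hx₀Ω
        have huz : u z ≤ MΓ := hFle z hzΓ
        have h1 : S - u x₀ ≤ η := by linarith
        have h2 : S - u z ≤ C^N * η := le_trans hz (mul_le_mul_of_nonneg_left h1 hCN.le)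
        linarith
      · have h1 : u x₀ ≤ MΓ := hFle x₀ hx₀Γ
        have h2 : η ≤ C^N * η := le_mul_of_one_le_left hη.le hCN1
        linarith
    by_contra hc
    push_neg at hc
    have h1 := hstep2 ((S - MΓ)/(2*C^N)) (div_pos (by linarith) (by positivity))
    have heq : C^N * ((S - MΓ)/(2*C^N)) = (S - MΓ)/2 := by field_simp
    rw [heq] at h1
    linarith
  intro x hxD
  exact le_trans (huS x hxD) hSM

/-- **Maximum principle bound.** If `u` is a bounded Borel function on `Ω_ε` satisfying the
DPP at every point of `Ω` with `u = F` on `Γ_ε`, where `F` is bounded Borel on `Γ_ε`, then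
`|u(x)| ≤ sup_{Γ_ε} |F|` for every `x ∈ Ω_ε`. -/
theorem dpp_max_principle (n : ℕ) (hn : 2 ≤ n) (p : ℝ) (hp : 2 < p)
    (Ω : Set (EuclideanSpace ℝ (Fin n)))
    (hΩopen : IsOpen Ω) (hΩconn : IsConnected Ω) (hΩbdd : Bornology.IsBounded Ω)
    (ε : ℝ) (hε : ε ∈ Set.Ioo (0 : ℝ) 1)
    (F u : EuclideanSpace ℝ (Fin n) → ℝ)
    (hFmeas : Measurable F)
    (hFbdd : ∃ M, ∀ x ∈ {x | x ∉ Ω ∧ Metric.infDist x (frontier Ω) ≤ ε}, |F x| ≤ M)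
    (humeas : Measurable u)
    (hubdd : ∃ M, ∀ x ∈ Ω ∪ {x | x ∉ Ω ∧ Metric.infDist x (frontier Ω) ≤ ε}, |u x| ≤ M)
    (hudpp : ∀ x ∈ Ω, u x =
        ((p - 2) / (n + p)) / (2 * ε) *
            (∫ t in (0 : ℝ)..ε, (sSup (u '' Metric.ball x t) + sInf (u '' Metric.ball x t)))
          + ((n + 2) / (n + p)) * ⨍ z in Metric.ball x ε, u z)
    (hbdry : ∀ x ∈ {x | x ∉ Ω ∧ Metric.infDist x (frontier Ω) ≤ ε}, u x = F x) :
    ∀ x ∈ Ω ∪ {x | x ∉ Ω ∧ Metric.infDist x (frontier Ω) ≤ ε},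
      |u x| ≤ sSup ((fun y => |F y|) '' {x | x ∉ Ω ∧ Metric.infDist x (frontier Ω) ≤ ε}) := by
  obtain ⟨MF, hMF⟩ := hFbdd
  obtain ⟨K, hK⟩ := hubdd
  obtain ⟨hε0, hε1⟩ := hε
  have hup := dpp_le_sup n hn p hp Ω hΩopen hΩconn.nonempty hΩbdd ε hε0 hε1 F u humeas
    K hK MF hMF hudpp hbdry
  -- facts about negation of sSup/sInf of images
  have himg : ∀ (B : Set (EuclideanSpace ℝ (Fin n))),
      (fun y => -u y) '' B = -(u '' B) := by
    intro B
    ext r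
    simp only [Set.mem_image, Set.mem_neg]
    constructor
    · rintro ⟨y, hy, rfl⟩; exact ⟨y, hy, by ring⟩
    · rintro ⟨y, hy, hr⟩; exact ⟨y, hy, by linarith⟩
  have hsup_neg : ∀ (s : Set ℝ), sSup (-s) = -sInf s := by
    intro s; rw [Real.sInf_def, neg_neg]
  have hinf_neg : ∀ (s : Set ℝ), sInf (-s) = -sSup s := by
    intro s; rw [Real.sInf_def, neg_neg]
  have hudpp' : ∀ x ∈ Ω, (fun y => -u y) x =
      ((p - 2) / (n + p)) / (2 * ε) *
          (∫ t in (0 : ℝ)..ε, (sSup ((fun y => -u y) '' Metric.ball x t)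
            + sInf ((fun y => -u y) '' Metric.ball x t)))
        + ((n + 2) / (n + p)) * ⨍ z in Metric.ball x ε, (fun y => -u y) z := by
    intro x hx
    have hint : (∫ t in (0 : ℝ)..ε, (sSup ((fun y => -u y) '' Metric.ball x t)
            + sInf ((fun y => -u y) '' Metric.ball x t)))
        = -∫ t in (0 : ℝ)..ε, (sSup (u '' Metric.ball x t) + sInf (u '' Metric.ball x t)) := by
      rw [← intervalIntegral.integral_neg]
      apply intervalIntegral.integral_congr
      intro t _
      simp only [himg, hsup_neg, hinf_neg]
      ring
    have havg : (⨍ z in Metric.ball x ε, (fun y => -u y) z)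
        = -⨍ z in Metric.ball x ε, u z := by
      simp only
      rw [setAverage_eq, setAverage_eq, integral_neg, smul_neg]
    simp only at havg ⊢
    rw [hint, havg, hudpp x hx]
    ring
  have hdown := dpp_le_sup n hn p hp Ω hΩopen hΩconn.nonempty hΩbdd ε hε0 hε1
    (fun y => -F y) (fun y => -u y) humeas.neg
    K (by intro x hx; simpa using hK x hx)
    MF (by intro x hx; simpa using hMF x hx)
    hudpp'
    (by intro x hx; show -u x = -F x; rw [hbdry x hx])
  have himgF : ((fun y => |(fun z => -F z) y|) ''
        {x | x ∉ Ω ∧ Metric.infDist x (frontier Ω) ≤ ε})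
      = ((fun y => |F y|) '' {x | x ∉ Ω ∧ Metric.infDist x (frontier Ω) ≤ ε}) := by
    apply Set.image_congr
    intro y _
    simp [abs_neg]
  rw [himgF] at hdown
  intro x hx
  rw [abs_le]
  refine ⟨?_, hup x hx⟩
  have := hdown x hx
  linarith
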